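/- arXiv:2011.08640 — 3 statements merged into one kernel-verified Lean document; each statement's English description precedes it below -/
import Mathlib

section
/- Let M be a finite abelian group of order prime to p, which is a module over Z[G]/(N_G) where G is cyclic of order p generated by τ and N_G = 1 + τ + ... + τ^(p-1), equipped with a compatible action of Δ = (Z/pZ)^× acting on τ by σ·τ = τ^σ. Then the map φ : M^Δ ⊗_Z Z[G]/(N_G) → M given by Σ m_i ⊗ [τ^i] ↦ Σ τ^i m_i is an isomorphism of Δ-modules. In particular M ≅ (M^Δ)^(p-1) as abelian groups. -/
/-- The multiplicative group structure on `AddAut A` that older Mathlib provided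
(composition as multiplication); current Mathlib makes `AddAut A` an additive group. -/
instance AddAut.groupOld (A : Type*) [Add A] : Group (AddAut A) where
  mul g h := AddEquiv.trans h g
  one := AddEquiv.refl _
  inv := AddEquiv.symm
  mul_assoc _ _ _ := rfl
  one_mul _ := rfl
  mul_one _ := rfl
  inv_mul_cancel := AddEquiv.self_trans_symm


@[simp]
theorem st4_mul_apply {A : Type*} [Add A] (e₁ e₂ : AddAut A) (m : A) :
    (e₁ * e₂) m = e₁ (e₂ m) := rfl

@[simp]
theorem st4_one_apply {A : Type*} [Add A] (m : A) :
    (1 : AddAut A) m = m := rfl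

section st4helpers

variable {p : ℕ} [Fact p.Prime] {M : Type} [AddCommGroup M]

private lemma st4_pow_mod (τ : AddAut M) (hτ : τ ^ p = 1) (n : ℕ) :
    τ ^ n = τ ^ (n % p) := by
  conv_lhs => rw [← Nat.div_add_mod n p]
  rw [pow_add, pow_mul, hτ, one_pow, one_mul]

private lemma st4_pow_val_add (τ : AddAut M) (hτ : τ ^ p = 1) (x y : ZMod p) (m : M) :
    (τ ^ (x + y).val) m = (τ ^ x.val) ((τ ^ y.val) m) := by
  haveI : NeZero p := ⟨(Fact.out : p.Prime).ne_zero⟩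
  rw [ZMod.val_add, ← st4_pow_mod τ hτ, pow_add, st4_mul_apply]

private lemma st4_act_pow (τ : AddAut M) (act : (ZMod p)ˣ →* AddAut M)
    (hcomm : ∀ (σ : (ZMod p)ˣ) (m : M),
      act σ (τ m) = (τ ^ ((σ : ZMod p)).val) (act σ m))
    (σ : (ZMod p)ˣ) (n : ℕ) (m : M) :
    act σ ((τ ^ n) m) = (τ ^ ((σ : ZMod p).val * n)) (act σ m) := by
  induction n generalizing m with
  | zero => simp
  | succ n ih =>
    have h1 : (τ ^ (n + 1)) m = (τ ^ n) (τ m) := by rw [pow_succ, st4_mul_apply]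
    rw [h1, ih (τ m), hcomm σ m]
    have h2 : (σ : ZMod p).val * (n + 1) = (σ : ZMod p).val * n + (σ : ZMod p).val := by ring
    rw [h2, pow_add, st4_mul_apply]

private lemma st4_act_pow_val (τ : AddAut M) (hτ : τ ^ p = 1)
    (act : (ZMod p)ˣ →* AddAut M)
    (hcomm : ∀ (σ : (ZMod p)ˣ) (m : M),
      act σ (τ m) = (τ ^ ((σ : ZMod p)).val) (act σ m))
    (σ : (ZMod p)ˣ) (x : ZMod p) (m : M) :
    act σ ((τ ^ x.val) m) = (τ ^ ((σ : ZMod p) * x).val) (act σ m) := by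
  haveI : NeZero p := ⟨(Fact.out : p.Prime).ne_zero⟩
  rw [st4_act_pow τ act hcomm, ZMod.val_mul, ← st4_pow_mod τ hτ]

private lemma st4_sum_zmod (τ : AddAut M) (hτ : τ ^ p = 1)
    (hN : ∀ m : M, ∑ i ∈ Finset.range p, (τ ^ i) m = 0) (m : M) :
    ∑ x : ZMod p, (τ ^ x.val) m = 0 := by
  haveI : NeZero p := ⟨(Fact.out : p.Prime).ne_zero⟩
  rw [← hN m]
  refine Finset.sum_nbij' (fun x : ZMod p => x.val) (fun n : ℕ => (n : ZMod p))
    ?_ ?_ ?_ ?_ ?_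
  · intro a _; exact Finset.mem_range.mpr (ZMod.val_lt a)
  · intro a _; exact Finset.mem_univ _
  · intro a _; simp [ZMod.natCast_val]
  · intro a ha; exact ZMod.val_cast_of_lt (Finset.mem_range.mp ha)
  · intro a _; rfl

private lemma st4_sum_units (τ : AddAut M) (hτ : τ ^ p = 1)
    (hN : ∀ m : M, ∑ i ∈ Finset.range p, (τ ^ i) m = 0) (m : M) :
    ∑ i : (ZMod p)ˣ, (τ ^ ((i : ZMod p)).val) m = -m := by
  haveI : NeZero p := ⟨(Fact.out : p.Prime).ne_zero⟩
  have h0 : ∑ x : ZMod p, (τ ^ x.val) m = 0 := st4_sum_zmod τ hτ hN m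
  have hsplit : ∑ x : ZMod p, (τ ^ x.val) m
      = (τ ^ (0 : ZMod p).val) m + ∑ x ∈ Finset.univ.erase (0 : ZMod p), (τ ^ x.val) m :=
    (Finset.add_sum_erase _ _ (Finset.mem_univ 0)).symm
  have hunits : ∑ i : (ZMod p)ˣ, (τ ^ ((i : ZMod p)).val) m
      = ∑ x ∈ Finset.univ.erase (0 : ZMod p), (τ ^ x.val) m := by
    refine Finset.sum_nbij' (fun i : (ZMod p)ˣ => (i : ZMod p))
      (fun x : ZMod p => if h : x = 0 then 1 else Units.mk0 x h) ?_ ?_ ?_ ?_ ?_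
    · intro a _; exact Finset.mem_erase.mpr ⟨Units.ne_zero a, Finset.mem_univ _⟩
    · intro a _; exact Finset.mem_univ _
    · intro a _
      have h : ((a : ZMod p)) ≠ 0 := Units.ne_zero a
      simp [h]
    · intro a ha
      have h := (Finset.mem_erase.mp ha).1
      simp [h]
    · intro a _; rfl
  have hz : (τ ^ (0 : ZMod p).val) m = m := by simp [ZMod.val_zero]
  rw [hunits]
  rw [hsplit, hz, add_comm] at h0
  exact eq_neg_of_add_eq_zero_left h0

/-- `∑_{i ∈ Δ} τ^{i·d} m` equals `(p-1)•m` if `d = 0` and `-m` otherwise. -/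
private lemma st4_sum_units_mul (τ : AddAut M) (hτ : τ ^ p = 1)
    (hN : ∀ m : M, ∑ i ∈ Finset.range p, (τ ^ i) m = 0) (d : ZMod p) (m : M) :
    ∑ i : (ZMod p)ˣ, (τ ^ (((i : ZMod p)) * d).val) m
      = if d = 0 then (p - 1) • m else -m := by
  haveI : NeZero p := ⟨(Fact.out : p.Prime).ne_zero⟩
  by_cases hd : d = 0
  · subst hd
    simp only [mul_zero, ZMod.val_zero, pow_zero, if_true]
    rw [Finset.sum_const, Finset.card_univ, ZMod.card_units_eq_totient,
      Nat.totient_prime (Fact.out : p.Prime)]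
    rfl
  · rw [if_neg hd]
    have key : ∑ i : (ZMod p)ˣ, (τ ^ (((i : ZMod p)) * d).val) m
        = ∑ i : (ZMod p)ˣ, (τ ^ ((i : ZMod p)).val) m := by
      refine Fintype.sum_equiv (Equiv.mulRight (Units.mk0 d hd)) _ _ (fun i => ?_)
      simp [Units.val_mul]
    rw [key, st4_sum_units τ hτ hN]

/-- split an `ite` of the shape appearing in the main computation -/
private lemma st4_ite_split {N : Type*} [AddCommGroup N] {p : ℕ} (hp : 1 ≤ p)
    (P : Prop) [Decidable P] (x : N) :
    (if P then (p - 1) • x else -x) = (if P then p • x else 0) - x := by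
  by_cases h : P
  · rw [if_pos h, if_pos h, eq_sub_iff_add_eq, ← succ_nsmul, Nat.sub_add_cancel hp]
  · rw [if_neg h, if_neg h, zero_sub]

end st4helpers

/-- Let `M` be a finite abelian group of order prime to `p`, a module over
`ℤ[G]/(N_G)` (encoded by an automorphism `τ` of order dividing `p` on which the norm
element acts as zero) with a compatible twisted action of `Δ = (ℤ/p)ˣ` (`σ·τ = τ^σ`).
Then `φ : M^Δ ⊗ ℤ[G]/(N_G) → M`, `Σ mᵢ ⊗ [τ^i] ↦ Σ τ^i mᵢ`, is an isomorphism of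
`Δ`-modules; in particular `M ≅ (M^Δ)^(p-1)` as abelian groups. -/
theorem stmt_4 (p : ℕ) [Fact p.Prime] (hodd : Odd p)
    (M : Type) [AddCommGroup M] [Finite M] (hM : (Nat.card M).Coprime p)
    (τ : AddAut M) (hτ : τ ^ p = 1)
    (hN : ∀ m : M, ∑ i ∈ Finset.range p, (τ ^ i) m = 0)
    (act : (ZMod p)ˣ →* AddAut M)
    (hcomm : ∀ (σ : (ZMod p)ˣ) (m : M),
      act σ (τ m) = (τ ^ ((σ : ZMod p)).val) (act σ m)) :
    -- φ is injective
    (∀ v : (ZMod p)ˣ → M, (∀ i σ, act σ (v i) = v i) →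
      (∑ i : (ZMod p)ˣ, (τ ^ ((i : ZMod p)).val) (v i)) = 0 → v = 0) ∧
    -- φ is surjective
    (∀ m : M, ∃ v : (ZMod p)ˣ → M, (∀ i σ, act σ (v i) = v i) ∧
      (∑ i : (ZMod p)ˣ, (τ ^ ((i : ZMod p)).val) (v i)) = m) ∧
    -- φ is Δ-equivariant (Δ permutes the coordinates of the tensor factor)
    (∀ (σ : (ZMod p)ˣ) (v : (ZMod p)ˣ → M), (∀ i σ', act σ' (v i) = v i) →
      act σ (∑ i : (ZMod p)ˣ, (τ ^ ((i : ZMod p)).val) (v i)) =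
        ∑ i : (ZMod p)ˣ, (τ ^ ((i : ZMod p)).val) (v (σ⁻¹ * i))) ∧
    -- in particular, M ≅ (M^Δ)^(p-1) as abelian groups
    (∃ S : AddSubgroup M, (S : Set M) = {m : M | ∀ σ, act σ m = m} ∧
      Nonempty (M ≃+ (Fin (p - 1) → S))) := by
  haveI : NeZero p := ⟨(Fact.out : p.Prime).ne_zero⟩
  have hp1 : 1 ≤ p := (Fact.out : p.Prime).one_lt.le
  have hact := st4_act_pow_val τ hτ act hcomm
  have hsum_mul := st4_sum_units_mul τ hτ hN
  have hcardu : Fintype.card (ZMod p)ˣ = p - 1 := by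
    rw [ZMod.card_units_eq_totient, Nat.totient_prime (Fact.out : p.Prime)]
  -- an integer inverse of p
  obtain ⟨k, hk⟩ : ∃ k : ℤ, ∀ m : M, k • (p • m) = m := by
    refine ⟨Nat.gcdB (Nat.card M) p, fun m => ?_⟩
    have hbez := Nat.gcd_eq_gcd_ab (Nat.card M) p
    rw [hM, Nat.cast_one] at hbez
    have hcard : (Nat.card M : ℤ) • m = 0 := by
      rw [natCast_zsmul]; exact card_nsmul_eq_zero'
    have h1 : ((Nat.card M : ℤ) * Nat.gcdA (Nat.card M) p) • m = 0 := by
      rw [mul_comm, mul_smul, hcard, smul_zero]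
    have h3 : m = ((p : ℤ) * Nat.gcdB (Nat.card M) p) • m := by
      have h4 : (1 : ℤ) • m = ((Nat.card M : ℤ) * Nat.gcdA (Nat.card M) p) • m
          + ((p : ℤ) * Nat.gcdB (Nat.card M) p) • m := by
        rw [← add_smul, ← hbez]
      simpa [h1] using h4
    calc Nat.gcdB (Nat.card M) p • (p • m)
        = Nat.gcdB (Nat.card M) p • ((p : ℤ) • m) := by rw [natCast_zsmul]
      _ = ((p : ℤ) * Nat.gcdB (Nat.card M) p) • m := by rw [← mul_smul, mul_comm]
      _ = m := h3.symm
  -- fixedness of averaged elements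
  have hθfix : ∀ (x : M) (σ' : (ZMod p)ˣ),
      act σ' (∑ σ : (ZMod p)ˣ, act σ x) = ∑ σ : (ZMod p)ˣ, act σ x := by
    intro x σ'
    rw [map_sum]
    refine Fintype.sum_equiv (Equiv.mulLeft σ') _ _ (fun σ => ?_)
    have h : act σ' (act σ x) = act (σ' * σ) x := by rw [map_mul, st4_mul_apply]
    rw [h]
    simp
  -- ===== injectivity =====
  have inj : ∀ v : (ZMod p)ˣ → M, (∀ i σ, act σ (v i) = v i) →
      (∑ i : (ZMod p)ˣ, (τ ^ ((i : ZMod p)).val) (v i)) = 0 → v = 0 := by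
    intro v hfix hsum
    have hrel : ∀ a : (ZMod p)ˣ,
        ∑ i : (ZMod p)ˣ, (τ ^ (((a : ZMod p)) * (i : ZMod p)).val) (v i) = 0 := by
      intro a
      have h1 : act a (∑ i : (ZMod p)ˣ, (τ ^ ((i : ZMod p)).val) (v i)) = 0 := by
        rw [hsum, map_zero]
      rw [map_sum] at h1
      rw [← h1]
      refine Finset.sum_congr rfl fun i _ => ?_
      rw [hact a (i : ZMod p) (v i), hfix i a]
    have hS : ∀ j : (ZMod p)ˣ, p • v j = ∑ i : (ZMod p)ˣ, v i := by
      intro j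
      have h2 : ∑ a : (ZMod p)ˣ,
          (τ ^ ((-((a : ZMod p) * (j : ZMod p)))).val)
            (∑ i : (ZMod p)ˣ, (τ ^ (((a : ZMod p)) * (i : ZMod p)).val) (v i)) = 0 := by
        refine Finset.sum_eq_zero fun a _ => ?_
        rw [hrel a, map_zero]
      have h3 : ∀ a : (ZMod p)ˣ,
          (τ ^ ((-((a : ZMod p) * (j : ZMod p)))).val)
            (∑ i : (ZMod p)ˣ, (τ ^ (((a : ZMod p)) * (i : ZMod p)).val) (v i))
          = ∑ i : (ZMod p)ˣ,
              (τ ^ (((a : ZMod p)) * ((i : ZMod p) - (j : ZMod p))).val) (v i) := by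
        intro a
        rw [map_sum]
        refine Finset.sum_congr rfl fun i _ => ?_
        rw [← st4_pow_val_add τ hτ]
        have h : -((a : ZMod p) * (j : ZMod p)) + (a : ZMod p) * (i : ZMod p)
            = (a : ZMod p) * ((i : ZMod p) - (j : ZMod p)) := by ring
        rw [h]
      rw [Finset.sum_congr rfl (fun a _ => h3 a), Finset.sum_comm] at h2
      have h4 : ∀ i : (ZMod p)ˣ,
          ∑ a : (ZMod p)ˣ,
            (τ ^ (((a : ZMod p)) * ((i : ZMod p) - (j : ZMod p))).val) (v i)
          = (if i = j then p • v i else 0) - v i := by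
        intro i
        rw [hsum_mul ((i : ZMod p) - (j : ZMod p)) (v i)]
        have hcond : ((i : ZMod p) - (j : ZMod p) = 0) ↔ i = j := by
          rw [sub_eq_zero]
          exact ⟨fun h => Units.ext h, fun h => by rw [h]⟩
        rw [if_congr hcond rfl rfl, st4_ite_split hp1]
      rw [Finset.sum_congr rfl (fun i _ => h4 i), Finset.sum_sub_distrib] at h2
      have h5 : ∑ i : (ZMod p)ˣ, (if i = j then p • v i else 0) = p • v j := by
        simp
      rw [h5] at h2
      exact sub_eq_zero.mp h2
    have hS0 : ∑ i : (ZMod p)ˣ, v i = 0 := by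
      have h6 : (p - 1) • (∑ i : (ZMod p)ˣ, v i) + (∑ i : (ZMod p)ˣ, v i)
          = (p - 1) • (∑ i : (ZMod p)ˣ, v i) := by
        rw [← succ_nsmul, Nat.sub_add_cancel hp1]
        calc p • ∑ i : (ZMod p)ˣ, v i = ∑ j : (ZMod p)ˣ, p • v j := by
              rw [Finset.smul_sum]
          _ = ∑ _j : (ZMod p)ˣ, ∑ i : (ZMod p)ˣ, v i :=
              Finset.sum_congr rfl fun j _ => hS j
          _ = (p - 1) • ∑ i : (ZMod p)ˣ, v i := by
              rw [Finset.sum_const, Finset.card_univ, hcardu]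
      exact add_eq_left.mp h6
    funext j
    have h8 : p • v j = 0 := by rw [hS j, hS0]
    calc v j = k • (p • v j) := (hk _).symm
      _ = 0 := by rw [h8, smul_zero]
  -- ===== surjectivity =====
  have surj : ∀ m : M, ∃ v : (ZMod p)ˣ → M, (∀ i σ, act σ (v i) = v i) ∧
      (∑ i : (ZMod p)ˣ, (τ ^ ((i : ZMod p)).val) (v i)) = m := by
    intro m
    have hF : ∀ c : ZMod p,
        ∑ i : (ZMod p)ˣ, (τ ^ ((i : ZMod p)).val)
          (∑ σ : (ZMod p)ˣ, act σ ((τ ^ (c * (i : ZMod p)).val) m))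
        = ∑ σ : (ZMod p)ˣ,
            (if 1 + (σ : ZMod p) * c = 0 then (p - 1) • (act σ m) else -(act σ m)) := by
      intro c
      have step1 : ∀ i : (ZMod p)ˣ,
          (τ ^ ((i : ZMod p)).val)
            (∑ σ : (ZMod p)ˣ, act σ ((τ ^ (c * (i : ZMod p)).val) m))
          = ∑ σ : (ZMod p)ˣ,
              (τ ^ (((i : ZMod p)) * (1 + (σ : ZMod p) * c)).val) (act σ m) := by
        intro i
        rw [map_sum]
        refine Finset.sum_congr rfl fun σ _ => ?_
        rw [hact σ (c * (i : ZMod p)) m, ← st4_pow_val_add τ hτ]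
        have h : (i : ZMod p) + (σ : ZMod p) * (c * (i : ZMod p))
            = (i : ZMod p) * (1 + (σ : ZMod p) * c) := by ring
        rw [h]
      rw [Finset.sum_congr rfl (fun i _ => step1 i), Finset.sum_comm]
      exact Finset.sum_congr rfl fun σ _ => hsum_mul _ _
    -- F 0 = -θ m
    have hF0 : ∑ i : (ZMod p)ˣ, (τ ^ ((i : ZMod p)).val)
          (∑ σ : (ZMod p)ˣ, act σ ((τ ^ ((0 : ZMod p) * (i : ZMod p)).val) m))
        = -∑ σ : (ZMod p)ˣ, act σ m := by
      rw [hF 0, ← Finset.sum_neg_distrib]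
      refine Finset.sum_congr rfl fun σ _ => ?_
      rw [if_neg]
      simp
    -- F (-1) = p • m - θ m
    have hFm1 : ∑ i : (ZMod p)ˣ, (τ ^ ((i : ZMod p)).val)
          (∑ σ : (ZMod p)ˣ, act σ ((τ ^ ((-1 : ZMod p) * (i : ZMod p)).val) m))
        = p • m - ∑ σ : (ZMod p)ˣ, act σ m := by
      rw [hF (-1)]
      have hcond : ∀ σ : (ZMod p)ˣ, (1 + (σ : ZMod p) * (-1) = 0) ↔ σ = 1 := by
        intro σ
        rw [mul_neg_one, add_neg_eq_zero]
        exact ⟨fun h => Units.ext h.symm, fun h => by rw [h, Units.val_one]⟩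
      calc ∑ σ : (ZMod p)ˣ,
            (if 1 + (σ : ZMod p) * (-1) = 0 then (p - 1) • (act σ m) else -(act σ m))
          = ∑ σ : (ZMod p)ˣ, ((if σ = 1 then p • (act σ m) else 0) - act σ m) := by
            refine Finset.sum_congr rfl fun σ _ => ?_
            rw [if_congr (hcond σ) rfl rfl, st4_ite_split hp1]
        _ = p • m - ∑ σ : (ZMod p)ˣ, act σ m := by
            rw [Finset.sum_sub_distrib]
            congr 1
            simp
    -- Σ_{c : ZMod p} F c = 0
    have hFall : ∑ c : ZMod p, ∑ i : (ZMod p)ˣ, (τ ^ ((i : ZMod p)).val)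
          (∑ σ : (ZMod p)ˣ, act σ ((τ ^ (c * (i : ZMod p)).val) m))
        = 0 := by
      rw [Finset.sum_congr rfl (fun c _ => hF c), Finset.sum_comm]
      refine Finset.sum_eq_zero fun σ _ => ?_
      have hval : (σ : ZMod p) * (-((σ⁻¹ : (ZMod p)ˣ) : ZMod p)) = -1 := by
        rw [mul_neg, ← Units.val_mul, mul_inv_cancel, Units.val_one]
      have hcond : ∀ c : ZMod p,
          (1 + (σ : ZMod p) * c = 0) ↔ c = -((σ⁻¹ : (ZMod p)ˣ) : ZMod p) := by
        intro c
        constructor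
        · intro h
          have h' : (σ : ZMod p) * c = (σ : ZMod p) * (-((σ⁻¹ : (ZMod p)ˣ) : ZMod p)) := by
            rw [hval]
            linear_combination h
          exact mul_left_cancel₀ (Units.ne_zero σ) h'
        · intro h
          rw [h, hval]
          ring
      calc ∑ c : ZMod p,
            (if 1 + (σ : ZMod p) * c = 0 then (p - 1) • (act σ m) else -(act σ m))
          = ∑ c : ZMod p,
              ((if c = -((σ⁻¹ : (ZMod p)ˣ) : ZMod p) then p • (act σ m) else 0) - act σ m) := by
            refine Finset.sum_congr rfl fun c _ => ?_
            rw [if_congr (hcond c) rfl rfl]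
            exact st4_ite_split hp1 _ _
        _ = 0 := by
            rw [Finset.sum_sub_distrib, Finset.sum_ite_eq' Finset.univ,
              if_pos (Finset.mem_univ _), Finset.sum_const, Finset.card_univ, ZMod.card]
            exact sub_self _
    -- Σ_{c ≠ 0} F c = θ m
    have herase : ∑ c ∈ Finset.univ.erase (0 : ZMod p),
          ∑ i : (ZMod p)ˣ, (τ ^ ((i : ZMod p)).val)
            (∑ σ : (ZMod p)ˣ, act σ ((τ ^ (c * (i : ZMod p)).val) m))
        = ∑ σ : (ZMod p)ˣ, act σ m := by
      have hadd := Finset.add_sum_erase Finset.univ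
        (fun c : ZMod p => ∑ i : (ZMod p)ˣ, (τ ^ ((i : ZMod p)).val)
          (∑ σ : (ZMod p)ˣ, act σ ((τ ^ (c * (i : ZMod p)).val) m)))
        (Finset.mem_univ (0 : ZMod p))
      rw [hFall] at hadd
      rw [add_comm] at hadd
      have h9 := eq_neg_of_add_eq_zero_left hadd
      rw [h9, hF0, neg_neg]
    -- the witness
    refine ⟨fun i => k • ((∑ σ : (ZMod p)ˣ, act σ ((τ ^ ((-1 : ZMod p) * (i : ZMod p)).val) m))
      + ∑ c ∈ Finset.univ.erase (0 : ZMod p),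
          ∑ σ : (ZMod p)ˣ, act σ ((τ ^ (c * (i : ZMod p)).val) m)), ?_, ?_⟩
    · intro i σ'
      rw [map_zsmul, map_add, hθfix, map_sum]
      congr 2
      exact Finset.sum_congr rfl fun c _ => hθfix _ σ'
    · calc ∑ i : (ZMod p)ˣ, (τ ^ ((i : ZMod p)).val)
            (k • ((∑ σ : (ZMod p)ˣ, act σ ((τ ^ ((-1 : ZMod p) * (i : ZMod p)).val) m))
              + ∑ c ∈ Finset.univ.erase (0 : ZMod p),
                  ∑ σ : (ZMod p)ˣ, act σ ((τ ^ (c * (i : ZMod p)).val) m)))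
          = k • ((∑ i : (ZMod p)ˣ, (τ ^ ((i : ZMod p)).val)
                (∑ σ : (ZMod p)ˣ, act σ ((τ ^ ((-1 : ZMod p) * (i : ZMod p)).val) m)))
              + ∑ i : (ZMod p)ˣ, (τ ^ ((i : ZMod p)).val)
                  (∑ c ∈ Finset.univ.erase (0 : ZMod p),
                    ∑ σ : (ZMod p)ˣ, act σ ((τ ^ (c * (i : ZMod p)).val) m))) := by
            rw [← Finset.sum_add_distrib, Finset.smul_sum]
            exact Finset.sum_congr rfl fun i _ => by rw [map_zsmul, map_add]
        _ = k • (p • m) := by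
            have hswap : ∑ i : (ZMod p)ˣ, (τ ^ ((i : ZMod p)).val)
                  (∑ c ∈ Finset.univ.erase (0 : ZMod p),
                    ∑ σ : (ZMod p)ˣ, act σ ((τ ^ (c * (i : ZMod p)).val) m))
                = ∑ c ∈ Finset.univ.erase (0 : ZMod p),
                    ∑ i : (ZMod p)ˣ, (τ ^ ((i : ZMod p)).val)
                      (∑ σ : (ZMod p)ˣ, act σ ((τ ^ (c * (i : ZMod p)).val) m)) := by
              rw [Finset.sum_congr rfl fun i (_ : i ∈ Finset.univ) => map_sum _ _ _]
              exact Finset.sum_comm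
            rw [hswap, herase, hFm1, sub_add_cancel]
        _ = m := hk m
  -- ===== equivariance =====
  have equivar : ∀ (σ : (ZMod p)ˣ) (v : (ZMod p)ˣ → M), (∀ i σ', act σ' (v i) = v i) →
      act σ (∑ i : (ZMod p)ˣ, (τ ^ ((i : ZMod p)).val) (v i)) =
        ∑ i : (ZMod p)ˣ, (τ ^ ((i : ZMod p)).val) (v (σ⁻¹ * i)) := by
    intro σ v hfix
    rw [map_sum]
    refine Fintype.sum_equiv (Equiv.mulLeft σ) _ _ (fun i => ?_)
    rw [hact σ (i : ZMod p) (v i), hfix i σ]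
    have h1 : ((Equiv.mulLeft σ i : (ZMod p)ˣ) : ZMod p) = (σ : ZMod p) * (i : ZMod p) := by
      simp [Units.val_mul]
    have h2 : σ⁻¹ * (Equiv.mulLeft σ i) = i := by
      simp
    rw [h1, h2]
  refine ⟨inj, surj, equivar, ?_⟩
  -- ===== the subgroup of invariants and the isomorphism =====
  refine ⟨{ carrier := {m : M | ∀ σ, act σ m = m}
            zero_mem' := by simp
            add_mem' := fun ha hb σ => by
              rw [Set.mem_setOf_eq] at ha hb
              rw [map_add, ha σ, hb σ]
            neg_mem' := fun ha σ => by
              rw [Set.mem_setOf_eq] at ha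
              rw [map_neg, ha σ] }, rfl, ?_⟩
  set S : AddSubgroup M :=
    { carrier := {m : M | ∀ σ, act σ m = m}
      zero_mem' := by simp
      add_mem' := fun ha hb σ => by
        rw [Set.mem_setOf_eq] at ha hb
        rw [map_add, ha σ, hb σ]
      neg_mem' := fun ha σ => by
        rw [Set.mem_setOf_eq] at ha
        rw [map_neg, ha σ] } with hSdef
  let Φ : ((ZMod p)ˣ → S) →+ M :=
    { toFun := fun v => ∑ i : (ZMod p)ˣ, (τ ^ ((i : ZMod p)).val) ((v i : M))
      map_zero' := by simp
      map_add' := fun v w => by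
        rw [← Finset.sum_add_distrib]
        exact Finset.sum_congr rfl fun i _ => by
          simp [map_add] }
  have hbij : Function.Bijective Φ := by
    constructor
    · intro v w h
      have h0 : (fun i : (ZMod p)ˣ => ((v i : M) - (w i : M))) = 0 := by
        apply inj
        · intro i σ
          rw [map_sub, (v i).2 σ, (w i).2 σ]
        · have hsub : ∑ i : (ZMod p)ˣ, (τ ^ ((i : ZMod p)).val) ((v i : M) - (w i : M))
              = (∑ i : (ZMod p)ˣ, (τ ^ ((i : ZMod p)).val) ((v i : M)))
                - ∑ i : (ZMod p)ˣ, (τ ^ ((i : ZMod p)).val) ((w i : M)) := by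
            rw [← Finset.sum_sub_distrib]
            exact Finset.sum_congr rfl fun i _ => by rw [map_sub]
          have hvw : (∑ i : (ZMod p)ˣ, (τ ^ ((i : ZMod p)).val) ((v i : M)))
              = ∑ i : (ZMod p)ˣ, (τ ^ ((i : ZMod p)).val) ((w i : M)) := h
          rw [hsub, hvw, sub_self]
      funext i
      have h1 := congrFun h0 i
      exact Subtype.ext (sub_eq_zero.mp h1)
    · intro m
      obtain ⟨v, hfx, hsum⟩ := surj m
      exact ⟨fun i => ⟨v i, fun σ => hfx i σ⟩, hsum⟩
  have e : (ZMod p)ˣ ≃ Fin (p - 1) := Fintype.equivFinOfCardEq hcardu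
  exact ⟨(AddEquiv.ofBijective Φ hbij).symm.trans
    (AddEquiv.arrowCongr e (AddEquiv.refl S))⟩
end

section
/- In the filtration A ⊃ (τ-1)A ⊃ (τ-1)²A ⊃ ⋯ of A = Z_p[G]/(N_G), each successive quotient (τ-1)^i A/(τ-1)^{i+1} A is a one-dimensional F_p-vector space on which Δ ≅ F_p^× acts through the character ω^i. -/
abbrev Gp (p : ℕ) := Multiplicative (ZMod p)

noncomputable def NG (p : ℕ) [Fact p.Prime] : MonoidAlgebra ℤ_[p] (Gp p) :=
  ∑ g : Gp p, MonoidAlgebra.of ℤ_[p] (Gp p) g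

/-- The ring `A = ℤ_p[G]/(N_G)`. -/
abbrev Ap (p : ℕ) [Fact p.Prime] :=
  MonoidAlgebra ℤ_[p] (Gp p) ⧸ Ideal.span {NG p}

noncomputable def tau (p : ℕ) [Fact p.Prime] : Ap p :=
  Ideal.Quotient.mk _ (MonoidAlgebra.of ℤ_[p] (Gp p) (Multiplicative.ofAdd (1 : ZMod p)))

set_option maxHeartbeats 1000000
set_option synthInstance.maxHeartbeats 200000

open Polynomial Finset

section Eis

variable (p : ℕ) [hp : Fact p.Prime]

lemma sum_choose_eq (m n : ℕ) : ∑ j ∈ range m, j.choose n = m.choose (n+1) := by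
  induction m with
  | zero => simp
  | succ m ih => rw [Finset.sum_range_succ, ih, Nat.choose_succ_succ (m) (n), Nat.add_comm]

noncomputable def fE : ℤ_[p][X] := ∑ j ∈ range p, (X + 1)^j

lemma fE_coeff (n : ℕ) : (fE p).coeff n = (p.choose (n+1) : ℤ_[p]) := by
  rw [fE, finset_sum_coeff]
  simp only [coeff_X_add_one_pow]
  rw [← Nat.cast_sum, sum_choose_eq]

lemma fE_natDegree_le : (fE p).natDegree ≤ p - 1 := by
  apply natDegree_sum_le_of_forall_le
  intro j hj
  calc ((X+1:ℤ_[p][X])^j).natDegree ≤ j * (X+1:ℤ_[p][X]).natDegree := natDegree_pow_le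
    _ ≤ j * 1 := by
        gcongr
        calc (X+1:ℤ_[p][X]).natDegree ≤ max (X:ℤ_[p][X]).natDegree (1:ℤ_[p][X]).natDegree :=
          natDegree_add_le _ _
          _ ≤ 1 := by simp
    _ ≤ p - 1 := by have := mem_range.mp hj; omega

lemma fE_coeff_top : (fE p).coeff (p-1) = 1 := by
  rw [fE_coeff, Nat.sub_add_cancel hp.out.one_le, Nat.choose_self, Nat.cast_one]

lemma fE_monic : (fE p).Monic :=
  monic_of_natDegree_le_of_coeff_eq_one (p-1) (fE_natDegree_le p) (fE_coeff_top p)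

lemma fE_natDegree : (fE p).natDegree = p - 1 :=
  le_antisymm (fE_natDegree_le p)
    (le_natDegree_of_ne_zero (by rw [fE_coeff_top]; exact one_ne_zero))

lemma fE_degree : (fE p).degree = ((p - 1 : ℕ) : WithBot ℕ) := by
  rw [degree_eq_natDegree (fE_monic p).ne_zero, fE_natDegree]

lemma p_not_unit : ¬ IsUnit (p : ℤ_[p]) := by
  intro h
  have h2 := h.map PadicInt.toZMod
  rw [map_natCast, ZMod.natCast_self] at h2
  haveI : Fact (1 < p) := ⟨hp.out.one_lt⟩
  exact not_isUnit_zero h2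

lemma fE_irred : Irreducible (fE p) := by
  have hP : (Ideal.span {(p : ℤ_[p])}).IsPrime := by
    rw [← PadicInt.maximalIdeal_eq_span_p]
    exact (IsLocalRing.maximalIdeal.isMaximal _).isPrime
  apply irreducible_of_eisenstein_criterion hP
  · rw [(fE_monic p).leadingCoeff]
    intro h
    exact p_not_unit p (isUnit_of_dvd_one (Ideal.mem_span_singleton.mp h))
  · intro n hn
    rw [fE_degree] at hn
    have hn' : n < p - 1 := by exact_mod_cast hn
    rw [fE_coeff, Ideal.mem_span_singleton]
    have h2 := hp.out.two_le
    exact_mod_cast Nat.cast_dvd_cast (α := ℤ_[p])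
      (hp.out.dvd_choose_self (Nat.succ_ne_zero n) (by omega))
  · rw [fE_degree]
    have h2 := hp.out.two_le
    exact_mod_cast Nat.pos_of_ne_zero (by omega)
  · rw [fE_coeff, zero_add, Nat.choose_one_right, sq, Ideal.span_singleton_mul_span_singleton,
      Ideal.mem_span_singleton]
    rintro ⟨t, ht⟩
    have hp0 : (p : ℤ_[p]) ≠ 0 := Nat.cast_ne_zero.mpr hp.out.ne_zero
    apply p_not_unit p
    refine IsUnit.of_mul_eq_one t ?_
    apply mul_left_cancel₀ hp0
    rw [mul_one, ← mul_assoc, ← ht]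
  · exact (fE_monic p).isPrimitive

lemma spanfE_prime : (Ideal.span {fE p}).IsPrime :=
  (Ideal.span_singleton_prime (fE_monic p).ne_zero).mpr
    (UniqueFactorizationMonoid.irreducible_iff_prime.mp (fE_irred p))

abbrev Qp := ℤ_[p][X] ⧸ Ideal.span {fE p}

noncomputable def zeta : Qp p := Ideal.Quotient.mk _ (X + 1)

lemma zeta_pow_p : (zeta p) ^ p = 1 := by
  have h : ((X:ℤ_[p][X]) + 1)^p - 1 = fE p * X := by
    have h2 := geom_sum_mul ((X:ℤ_[p][X]) + 1) p
    rw [← h2, fE]; ring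
  rw [zeta, ← map_pow, show (1 : Qp p) = Ideal.Quotient.mk _ (1:ℤ_[p][X]) from rfl,
    Ideal.Quotient.eq, h]
  exact Ideal.mul_mem_right _ _ (Ideal.subset_span rfl)

lemma zeta_pow_mod (m : ℕ) : zeta p ^ m = zeta p ^ (m % p) := by
  conv_lhs => rw [← Nat.mod_add_div m p]
  rw [pow_add, pow_mul, zeta_pow_p, one_pow, mul_one]

noncomputable def phi : Gp p →* Qp p where
  toFun g := zeta p ^ (Multiplicative.toAdd g).val
  map_one' := by
    haveI : NeZero p := ⟨hp.out.ne_zero⟩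
    show zeta p ^ (Multiplicative.toAdd (1 : Gp p)).val = 1
    simp
  map_mul' a b := by
    haveI : NeZero p := ⟨hp.out.ne_zero⟩
    show zeta p ^ (Multiplicative.toAdd (a*b)).val = _
    rw [toAdd_mul, ZMod.val_add, ← zeta_pow_mod, pow_add]

noncomputable def psi : MonoidAlgebra ℤ_[p] (Gp p) →ₐ[ℤ_[p]] Qp p :=
  MonoidAlgebra.lift ℤ_[p] (Qp p) (Gp p) (phi p)

lemma zmod_sum {M : Type*} [AddCommMonoid M] (h : ZMod p → M) :
    ∑ g : ZMod p, h g = ∑ j ∈ range p, h (j : ZMod p) := by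
  haveI : NeZero p := ⟨hp.out.ne_zero⟩
  refine Finset.sum_nbij' (fun a => ZMod.val a) (fun j => ((j : ℕ) : ZMod p)) ?_ ?_ ?_ ?_ ?_
  · intro a _; exact mem_range.mpr (ZMod.val_lt a)
  · intro a _; exact mem_univ _
  · intro a _; simp [ZMod.natCast_val, ZMod.cast_id]
  · intro a ha; exact ZMod.val_cast_of_lt (mem_range.mp ha)
  · intro a _; simp [ZMod.natCast_val, ZMod.cast_id]

lemma psi_NG : psi p (NG p) = 0 := by
  haveI : NeZero p := ⟨hp.out.ne_zero⟩
  rw [NG, map_sum]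
  have h1 : ∀ g : Gp p, psi p (MonoidAlgebra.of ℤ_[p] (Gp p) g)
      = zeta p ^ (Multiplicative.toAdd g).val := fun g => MonoidAlgebra.lift_of _ g
  simp_rw [h1]
  have h2 : ∑ g : Gp p, zeta p ^ (Multiplicative.toAdd g).val
      = ∑ x : ZMod p, zeta p ^ x.val :=
    Fintype.sum_equiv Multiplicative.toAdd _ _ (fun g => rfl)
  rw [h2, zmod_sum p (fun x => zeta p ^ x.val)]
  have h3 : ∀ j ∈ range p, zeta p ^ ((j : ZMod p)).val = Ideal.Quotient.mk _ ((X+1:ℤ_[p][X])^j) := by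
    intro j hj
    rw [ZMod.val_cast_of_lt (mem_range.mp hj), zeta, ← map_pow]
  rw [Finset.sum_congr rfl h3, ← map_sum, ← fE]
  exact Ideal.Quotient.eq_zero_iff_mem.mpr (Ideal.subset_span rfl)

noncomputable def psibar : Ap p →+* Qp p :=
  Ideal.Quotient.lift _ (psi p).toRingHom (by
    intro a ha
    obtain ⟨t, ht⟩ := Ideal.mem_span_singleton'.mp ha
    rw [← ht]
    show psi p (t * NG p) = 0
    rw [map_mul, psi_NG, mul_zero])

lemma psibar_tau : psibar p (tau p) = zeta p := by
  haveI : Fact (1 < p) := ⟨hp.out.one_lt⟩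
  rw [tau]
  show psi p (MonoidAlgebra.of ℤ_[p] (Gp p) (Multiplicative.ofAdd (1 : ZMod p))) = zeta p
  simp only [psi]
  rw [MonoidAlgebra.lift_of]
  show zeta p ^ (Multiplicative.toAdd (Multiplicative.ofAdd (1 : ZMod p))).val = zeta p
  rw [toAdd_ofAdd, ZMod.val_one, pow_one]

noncomputable def theta : Qp p →+* ZMod p :=
  Ideal.Quotient.lift _ (PadicInt.toZMod.comp (evalRingHom (0:ℤ_[p]))) (by
    intro a ha
    obtain ⟨t, ht⟩ := Ideal.mem_span_singleton'.mp ha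
    rw [← ht, map_mul]
    have hfe : (fE p).eval 0 = (p : ℤ_[p]) := by
      rw [fE, eval_finset_sum]
      simp
    have h0 : (PadicInt.toZMod.comp (evalRingHom (0:ℤ_[p]))) (fE p) = 0 := by
      rw [RingHom.comp_apply, coe_evalRingHom, hfe, map_natCast, ZMod.natCast_self]
    rw [h0, mul_zero])

lemma theta_root : theta p (zeta p - 1) = 0 := by
  have h : zeta p - 1 = Ideal.Quotient.mk _ (X : ℤ_[p][X]) := by
    rw [zeta, show (1 : Qp p) = Ideal.Quotient.mk _ (1:ℤ_[p][X]) from rfl, ← map_sub]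
    congr 1; ring
  rw [h]
  show (PadicInt.toZMod.comp (evalRingHom (0:ℤ_[p]))) (X : ℤ_[p][X]) = 0
  rw [RingHom.comp_apply, coe_evalRingHom, eval_X, map_zero]

lemma root_ne (hodd : Odd p) : (zeta p - 1 : Qp p) ≠ 0 := by
  have h : zeta p - 1 = Ideal.Quotient.mk _ (X : ℤ_[p][X]) := by
    rw [zeta, show (1 : Qp p) = Ideal.Quotient.mk _ (1:ℤ_[p][X]) from rfl, ← map_sub]
    congr 1; ring
  rw [h]
  intro h0
  have hdvd : fE p ∣ X := Ideal.mem_span_singleton.mp (Ideal.Quotient.eq_zero_iff_mem.mp h0)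
  have hdeg := degree_le_of_dvd hdvd X_ne_zero
  rw [fE_degree, degree_X] at hdeg
  have h3 : 3 ≤ p := by
    have h2 := hp.out.two_le
    have ho := hodd
    rw [Nat.odd_iff] at ho
    omega
  have : ((p - 1 : ℕ) : WithBot ℕ) ≤ ((1 : ℕ) : WithBot ℕ) := by exact_mod_cast hdeg
  have := (Nat.cast_le (α := WithBot ℕ)).mp this
  omega

lemma tau_pow_mk (m : ℕ) : tau p ^ m
    = Ideal.Quotient.mk _ (MonoidAlgebra.of ℤ_[p] (Gp p) (Multiplicative.ofAdd ((m : ℕ) : ZMod p))) := by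
  rw [tau, ← map_pow, ← map_pow]
  congr 2
  rw [← ofAdd_nsmul]
  congr 1
  rw [nsmul_eq_mul, mul_one]

lemma tau_pow_sub_one_mem (m : ℕ) : tau p ^ m - 1 ∈ Ideal.span {tau p - 1} := by
  rw [Ideal.mem_span_singleton]
  exact ⟨∑ i ∈ range m, tau p ^ i, by rw [← geom_sum_mul]; ring⟩

lemma sum_tau_pow : ∑ j ∈ range p, tau p ^ j = 0 := by
  haveI : NeZero p := ⟨hp.out.ne_zero⟩
  have h0 : ∑ g : Gp p, (Ideal.Quotient.mk (Ideal.span {NG p})) (MonoidAlgebra.of ℤ_[p] (Gp p) g)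
      = 0 := by
    rw [← map_sum]
    exact Ideal.Quotient.eq_zero_iff_mem.mpr (Ideal.subset_span rfl)
  have h1 : ∑ g : Gp p, (Ideal.Quotient.mk (Ideal.span {NG p})) (MonoidAlgebra.of ℤ_[p] (Gp p) g)
      = ∑ x : ZMod p, tau p ^ x.val := by
    apply Fintype.sum_equiv Multiplicative.toAdd
    intro g
    rw [tau_pow_mk]
    simp [ZMod.natCast_val, ZMod.cast_id]
  rw [h1] at h0
  rw [zmod_sum p (fun x => tau p ^ x.val)] at h0
  rw [← h0]
  exact Finset.sum_congr rfl fun j hj => by rw [ZMod.val_cast_of_lt (mem_range.mp hj)]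

lemma p_mem : ((p:ℕ) : Ap p) ∈ Ideal.span {tau p - 1} := by
  have h : ((p:ℕ) : Ap p) = ∑ j ∈ range p, (1 - tau p ^ j) := by
    rw [Finset.sum_sub_distrib, sum_tau_pow, sub_zero, Finset.sum_const, card_range,
      nsmul_eq_mul, mul_one]
  rw [h]
  refine Ideal.sum_mem _ fun j _ => ?_
  have h2 := (Ideal.span {tau p - 1}).neg_mem (tau_pow_sub_one_mem p j)
  simpa using h2

lemma mem_adjoin (a : Ap p) : a ∈ Algebra.adjoin ℤ_[p] {tau p} := by
  obtain ⟨x, rfl⟩ := Ideal.Quotient.mk_surjective a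
  induction x using MonoidAlgebra.induction_linear with
  | zero => rw [map_zero]; exact Subalgebra.zero_mem _
  | add f g hf hg => rw [map_add]; exact Subalgebra.add_mem _ hf hg
  | single g r =>
    have h1 : (MonoidAlgebra.single g r : MonoidAlgebra ℤ_[p] (Gp p))
        = r • MonoidAlgebra.of ℤ_[p] (Gp p) g := by
      rw [MonoidAlgebra.of_apply, MonoidAlgebra.smul_single', mul_one]
    have hsm : (Ideal.Quotient.mk (Ideal.span {NG p})) (r • MonoidAlgebra.of ℤ_[p] (Gp p) g)
        = r • (Ideal.Quotient.mk (Ideal.span {NG p})) (MonoidAlgebra.of ℤ_[p] (Gp p) g) := by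
      rw [← Ideal.Quotient.mkₐ_eq_mk ℤ_[p], map_smul]
    rw [h1, hsm]
    apply Subalgebra.smul_mem
    have h2 : (Ideal.Quotient.mk (Ideal.span {NG p})) (MonoidAlgebra.of ℤ_[p] (Gp p) g)
        = tau p ^ (Multiplicative.toAdd g).val := by
      rw [tau_pow_mk]
      simp [ZMod.natCast_val, ZMod.cast_id]
    rw [h2]
    exact Subalgebra.pow_mem _ (Algebra.self_mem_adjoin_singleton _ _) _

lemma natCast_sub_mem (m n : ℕ) (h : (m : ZMod p) = (n : ZMod p)) :
    (m : Ap p) - (n : Ap p) ∈ Ideal.span {tau p - 1} := by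
  obtain ⟨t, ht⟩ := ((ZMod.natCast_eq_natCast_iff m n p).mp h).dvd
  have hc : (m : Ap p) - (n : Ap p) = ((p:ℕ) : Ap p) * ((-t : ℤ) : Ap p) := by
    have h1 : ((m:ℤ) - n : ℤ) = (p : ℤ) * (-t) := by rw [← neg_sub (n:ℤ) m, ht]; ring
    calc (m : Ap p) - (n : Ap p) = (((m:ℤ) - (n:ℤ) : ℤ) : Ap p) := by push_cast; ring
      _ = (((p:ℤ) * (-t) : ℤ) : Ap p) := by rw [h1]
      _ = ((p:ℕ) : Ap p) * ((-t : ℤ) : Ap p) := by push_cast; ring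
  rw [hc]
  exact Ideal.mul_mem_right _ _ (p_mem p)

lemma exists_resid (a : Ap p) :
    ∃ c : ZMod p, a - ((c.val : ℕ) : Ap p) ∈ Ideal.span {tau p - 1} := by
  haveI : NeZero p := ⟨hp.out.ne_zero⟩
  haveI : Fact (1 < p) := ⟨hp.out.one_lt⟩
  refine Algebra.adjoin_induction ?_ ?_ ?_ ?_ (mem_adjoin p a)
  · rintro x hx
    rw [Set.mem_singleton_iff] at hx; subst hx
    exact ⟨1, by rw [ZMod.val_one, Nat.cast_one]; exact Ideal.mem_span_singleton_self _⟩
  · intro r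
    refine ⟨PadicInt.toZMod r, ?_⟩
    have hker : r - (((PadicInt.toZMod r).val : ℕ) : ℤ_[p]) ∈ Ideal.span {(p : ℤ_[p])} := by
      rw [← PadicInt.maximalIdeal_eq_span_p, ← PadicInt.ker_toZMod, RingHom.mem_ker, map_sub,
        map_natCast, ZMod.natCast_val, ZMod.cast_id, sub_self]
    obtain ⟨s, hs⟩ := Ideal.mem_span_singleton'.mp hker
    have hc : algebraMap ℤ_[p] (Ap p) r - (((PadicInt.toZMod r).val : ℕ) : Ap p)
        = algebraMap ℤ_[p] (Ap p) s * ((p:ℕ) : Ap p) := by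
      rw [← map_natCast (algebraMap ℤ_[p] (Ap p)) (PadicInt.toZMod r).val, ← map_sub, ← hs,
        map_mul, map_natCast]
    rw [hc]
    exact Ideal.mul_mem_left _ _ (p_mem p)
  · rintro x y - - ⟨c, hc⟩ ⟨d, hd⟩
    refine ⟨c + d, ?_⟩
    have h1 : ((c.val + d.val : ℕ) : ZMod p) = (((c+d).val : ℕ) : ZMod p) := by
      push_cast [ZMod.natCast_val, ZMod.cast_id]
      rfl
    have h2 := natCast_sub_mem p _ _ h1
    have h3 : x + y - (((c+d).val : ℕ) : Ap p)
        = (x - ((c.val : ℕ) : Ap p)) + (y - ((d.val : ℕ) : Ap p))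
          + (((c.val + d.val : ℕ) : Ap p) - (((c+d).val : ℕ) : Ap p)) := by
      push_cast; ring
    rw [h3]
    exact Ideal.add_mem _ (Ideal.add_mem _ hc hd) h2
  · rintro x y - - ⟨c, hc⟩ ⟨d, hd⟩
    refine ⟨c * d, ?_⟩
    have h1 : ((c.val * d.val : ℕ) : ZMod p) = (((c*d).val : ℕ) : ZMod p) := by
      push_cast [ZMod.natCast_val, ZMod.cast_id]
      rfl
    have h2 := natCast_sub_mem p _ _ h1
    have h3 : x * y - (((c*d).val : ℕ) : Ap p)
        = x * (y - ((d.val : ℕ) : Ap p)) + ((d.val : ℕ) : Ap p) * (x - ((c.val : ℕ) : Ap p))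
          + (((c.val * d.val : ℕ) : Ap p) - (((c*d).val : ℕ) : Ap p)) := by
      push_cast; ring
    rw [h3]
    exact Ideal.add_mem _ (Ideal.add_mem _ (Ideal.mul_mem_left _ _ hd)
      (Ideal.mul_mem_left _ _ hc)) h2

lemma act_sub_mem (e : Ap p ≃ₐ[ℤ_[p]] Ap p) (he : ∃ k : ℕ, e (tau p) = tau p ^ k) (a : Ap p) :
    e a - a ∈ Ideal.span {tau p - 1} := by
  refine Algebra.adjoin_induction ?_ ?_ ?_ ?_ (mem_adjoin p a)
  · rintro x hx
    rw [Set.mem_singleton_iff] at hx; subst hx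
    obtain ⟨k, hk⟩ := he
    rw [hk]
    have h1 := tau_pow_sub_one_mem p k
    have h2 : tau p - 1 ∈ Ideal.span {tau p - 1} := Ideal.mem_span_singleton_self _
    have h3 : tau p ^ k - tau p = (tau p ^ k - 1) - (tau p - 1) := by ring
    rw [h3]
    exact Ideal.sub_mem _ h1 h2
  · intro r; rw [AlgEquiv.commutes, sub_self]; exact Ideal.zero_mem _
  · intro x y _ _ hx hy
    rw [map_add]
    have h : e x + e y - (x + y) = (e x - x) + (e y - y) := by ring
    rw [h]; exact Ideal.add_mem _ hx hy
  · intro x y _ _ hx hy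
    rw [map_mul]
    have h : e x * e y - x * y = e x * (e y - y) + y * (e x - x) := by ring
    rw [h]
    exact Ideal.add_mem _ (Ideal.mul_mem_left _ _ hy) (Ideal.mul_mem_left _ _ hx)

lemma tau_pow_lin (m : ℕ) :
    tau p ^ m - 1 - ((m:ℕ) : Ap p) * (tau p - 1) ∈ Ideal.span {(tau p - 1)^2} := by
  induction m with
  | zero => simpa using Ideal.zero_mem _
  | succ m ih =>
    obtain ⟨s, hs⟩ := Ideal.mem_span_singleton'.mp (tau_pow_sub_one_mem p m)
    have h : tau p ^ (m+1) - 1 - (((m+1:ℕ)) : Ap p) * (tau p - 1)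
        = (tau p ^ m - 1 - ((m:ℕ) : Ap p) * (tau p - 1)) + (tau p - 1) * (tau p ^ m - 1) := by
      push_cast; ring
    rw [h]
    refine Ideal.add_mem _ ih ?_
    rw [Ideal.mem_span_singleton']
    exact ⟨s, by rw [← hs]; ring⟩

lemma pow_congr (u v : Ap p) (hu : u ∈ Ideal.span {tau p - 1}) (hv : v ∈ Ideal.span {tau p - 1})
    (huv : u - v ∈ Ideal.span {(tau p - 1)^2}) (i : ℕ) :
    u ^ i - v ^ i ∈ Ideal.span {(tau p - 1)^(i+1)} := by
  induction i with
  | zero => simpa using Ideal.zero_mem _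
  | succ i ih =>
    obtain ⟨a, ha⟩ := Ideal.mem_span_singleton'.mp hu
    obtain ⟨b, hb⟩ := Ideal.mem_span_singleton'.mp ih
    obtain ⟨d, hd⟩ := Ideal.mem_span_singleton'.mp huv
    obtain ⟨e, he⟩ := Ideal.mem_span_singleton'.mp hv
    rw [Ideal.mem_span_singleton']
    refine ⟨a * b + d * e^i, ?_⟩
    have hvi : e^i * (tau p - 1)^i = v^i := by rw [← he, mul_pow]
    have h2 : u^(i+1) - v^(i+1) = u * (u^i - v^i) + (u - v) * v^i := by ring
    rw [h2, ← hb, ← hd, ← hvi, ← ha]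
    ring

end Eis

/-- in the filtration `A ⊃ (τ-1)A ⊃ (τ-1)²A ⊃ ⋯` of `A = ℤ_p[G]/(N_G)`,
each quotient `(τ-1)^i A/(τ-1)^{i+1} A` is a one-dimensional `𝔽_p`-vector space on which
`Δ ≅ 𝔽_pˣ` (acting by `ℤ_p`-algebra automorphisms with `σ(τ) = τ^{ω(σ)}`) acts through
the character `ω^i`. -/
theorem stmt_9 (p : ℕ) [Fact p.Prime] (hodd : Odd p)
    (act : (ZMod p)ˣ →* (Ap p ≃ₐ[ℤ_[p]] Ap p))
    (hact : ∀ σ : (ZMod p)ˣ, act σ (tau p) = (tau p) ^ ((σ : ZMod p)).val)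
    (i : ℕ) :
    -- the quotient is killed by p ...
    (∀ x ∈ Ideal.span {(tau p - 1) ^ i}, p • x ∈ Ideal.span {(tau p - 1) ^ (i + 1)}) ∧
    -- ... and is one-dimensional over 𝔽_p
    (∃ b ∈ Ideal.span {(tau p - 1) ^ i}, b ∉ Ideal.span {(tau p - 1) ^ (i + 1)} ∧
      ∀ x ∈ Ideal.span {(tau p - 1) ^ i}, ∃ c : ZMod p,
        x - c.val • b ∈ Ideal.span {(tau p - 1) ^ (i + 1)}) ∧
    -- Δ acts on it through ω^i
    (∀ (σ : (ZMod p)ˣ), ∀ x ∈ Ideal.span {(tau p - 1) ^ i},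
      act σ x - (((σ : ZMod p) ^ i)).val • x ∈ Ideal.span {(tau p - 1) ^ (i + 1)}) := by
  have hp : Fact p.Prime := inferInstance
  haveI : NeZero p := ⟨hp.out.ne_zero⟩
  haveI : Fact (1 < p) := ⟨hp.out.one_lt⟩
  obtain ⟨w, hw⟩ := Ideal.mem_span_singleton'.mp (p_mem p)
  refine ⟨?_, ?_, ?_⟩
  · intro x hx
    obtain ⟨a, ha⟩ := Ideal.mem_span_singleton'.mp hx
    rw [Ideal.mem_span_singleton']
    refine ⟨w * a, ?_⟩
    rw [nsmul_eq_mul, ← ha, ← hw]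
    ring
  · refine ⟨(tau p - 1)^i, Ideal.mem_span_singleton_self _, ?_, ?_⟩
    · intro hmem
      obtain ⟨a, ha⟩ := Ideal.mem_span_singleton'.mp hmem
      haveI := spanfE_prime p
      have h2 := congrArg (psibar p) ha
      simp only [map_mul, map_pow, map_sub, map_one, psibar_tau] at h2
      have h3 : (zeta p - 1)^i * (psibar p a * (zeta p - 1) - 1) = 0 := by
        linear_combination h2
      have h4 : psibar p a * (zeta p - 1) - 1 = 0 := by
        rcases mul_eq_zero.mp h3 with h | h
        · exact absurd h (pow_ne_zero _ (root_ne p hodd))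
        · exact h
      have h5 := congrArg (theta p) h4
      rw [map_sub, map_mul, map_one, theta_root, mul_zero, map_zero] at h5
      rw [zero_sub, neg_eq_zero] at h5
      exact one_ne_zero h5
    · intro x hx
      obtain ⟨a, ha⟩ := Ideal.mem_span_singleton'.mp hx
      obtain ⟨c, hc⟩ := exists_resid p a
      obtain ⟨s, hs⟩ := Ideal.mem_span_singleton'.mp hc
      refine ⟨c, ?_⟩
      rw [Ideal.mem_span_singleton']
      refine ⟨s, ?_⟩
      rw [nsmul_eq_mul, ← ha]
      linear_combination hs * (tau p - 1)^i
  · intro σ x hx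
    obtain ⟨a, ha⟩ := Ideal.mem_span_singleton'.mp hx
    set k : ℕ := ((σ : ZMod p)).val with hk
    have hτk : (act σ) (tau p - 1) = tau p ^ k - 1 := by rw [map_sub, map_one, hact]
    have hu : tau p ^ k - 1 ∈ Ideal.span {tau p - 1} := tau_pow_sub_one_mem p k
    have hv : ((k:ℕ) : Ap p) * (tau p - 1) ∈ Ideal.span {tau p - 1} :=
      Ideal.mul_mem_left _ _ (Ideal.mem_span_singleton_self _)
    have hpow := pow_congr p _ _ hu hv (tau_pow_lin p k) i
    have hfix := act_sub_mem p (act σ) ⟨k, hact σ⟩ a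
    have hcast : ((k^i : ℕ) : ZMod p) = (((((σ : ZMod p))^i).val : ℕ) : ZMod p) := by
      rw [hk]
      push_cast [ZMod.natCast_val, ZMod.cast_id]
      rfl
    have hcm := natCast_sub_mem p _ _ hcast
    have hkc : ((k^i : ℕ) : Ap p) = ((k : ℕ) : Ap p)^i := by push_cast; ring
    rw [hkc] at hcm
    have hx2 : (act σ) x = (act σ) a * ((tau p ^ k - 1))^i := by
      rw [← ha, map_mul, map_pow, hτk]
    rw [hx2, nsmul_eq_mul, ← ha]
    rw [show (((k:ℕ) : Ap p) * (tau p - 1))^i = ((k:ℕ) : Ap p)^i * (tau p - 1)^i from mul_pow _ _ _] at hpow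
    obtain ⟨b1, hb1⟩ := Ideal.mem_span_singleton'.mp hpow
    obtain ⟨b2, hb2⟩ := Ideal.mem_span_singleton'.mp hfix
    obtain ⟨b3, hb3⟩ := Ideal.mem_span_singleton'.mp hcm
    rw [Ideal.mem_span_singleton']
    refine ⟨(act σ) a * b1 + ((k:ℕ) : Ap p)^i * b2 + a * b3, ?_⟩
    linear_combination ((act σ) a) * hb1 + (((k:ℕ) : Ap p)^i * (tau p - 1)^i) * hb2
      + (a * (tau p - 1)^i) * hb3
end

section
/- Let Ω = {[[a,x],[0,1]] : a ∈ F_q^×, x ∈ F_q}, with χ_L the character of the regular representation, χ_K the permutation character on Ω/G, χ_F the permutation character on Ω/Δ, and χ_k the trivial character. Then, as class functions on Ω: χ_L - χ_k = (χ_K - χ_k) + (q-1)(χ_F - χ_k). -/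
set_option linter.unusedSectionVars false

open scoped Classical

open Matrix

namespace Stmt13

variable {F : Type} [Field F] [Fintype F]

noncomputable def toGL (b y : F) (hb : b ≠ 0) : GL (Fin 2) F :=
  ((Matrix.isUnit_iff_isUnit_det !![b, y; 0, 1]).mpr
    (by simpa [Matrix.det_fin_two_of, isUnit_iff_ne_zero] using hb)).unit

@[simp] lemma toGL_val (b y : F) (hb : b ≠ 0) : (toGL b y hb).val = !![b, y; 0, 1] :=
  IsUnit.unit_spec _

lemma ne00 (M : GL (Fin 2) F) (h10 : M.val 1 0 = 0) (h11 : M.val 1 1 = 1) :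
    M.val 0 0 ≠ 0 := by
  have h := (Matrix.isUnit_iff_isUnit_det M.val).mp M.isUnit
  rw [Matrix.det_fin_two, h10, h11] at h
  simpa [isUnit_iff_ne_zero] using h

lemma val_eq (M : GL (Fin 2) F) (h10 : M.val 1 0 = 0) (h11 : M.val 1 1 = 1) :
    M.val = !![M.val 0 0, M.val 0 1; 0, 1] := by
  conv_lhs => rw [Matrix.eta_fin_two M.val]
  rw [h10, h11]

def CG (b : F) : Set (GL (Fin 2) F) :=
  {M | M.val 1 0 = 0 ∧ M.val 1 1 = 1 ∧ M.val 0 0 = b}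

def CD (y : F) : Set (GL (Fin 2) F) :=
  {M | M.val 1 0 = 0 ∧ M.val 1 1 = 1 ∧ M.val 0 1 = y}

lemma toGL_mem_CG (b y : F) (hb : b ≠ 0) : toGL b y hb ∈ CG b := by
  refine ⟨?_, ?_, ?_⟩ <;> simp [toGL_val]

lemma toGL_mem_CD (b y : F) (hb : b ≠ 0) : toGL b y hb ∈ CD y := by
  refine ⟨?_, ?_, ?_⟩ <;> simp [toGL_val]

lemma CG_inj : Function.Injective (fun b : {b : F // b ≠ 0} => CG (b : F)) := by
  rintro ⟨b, hb⟩ ⟨b', hb'⟩ h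
  have h' : CG b = CG b' := h
  have hm : toGL b 0 hb ∈ CG b' := h' ▸ toGL_mem_CG b 0 hb
  have := hm.2.2
  simp only [toGL_val] at this
  apply Subtype.ext
  simpa using this

lemma CD_inj : Function.Injective (fun y : F => CD y) := by
  intro y y' h
  have h' : CD y = CD y' := h
  have hm : toGL 1 y one_ne_zero ∈ CD y' := h' ▸ toGL_mem_CD 1 y one_ne_zero
  have := hm.2.2
  simpa [toGL_val] using this

lemma cosetG (G : Subgroup (GL (Fin 2) F))
    (hG : ∀ M : GL (Fin 2) F, M ∈ G ↔ (M.val 1 0 = 0 ∧ M.val 1 1 = 1 ∧ M.val 0 0 = 1))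
    (w : GL (Fin 2) F) (hw10 : w.val 1 0 = 0) (hw11 : w.val 1 1 = 1) :
    (fun h => w * h) '' (G : Set (GL (Fin 2) F)) = CG (w.val 0 0) := by
  have hw00 := ne00 w hw10 hw11
  ext M
  constructor
  · rintro ⟨h, hh, rfl⟩
    obtain ⟨h10, h11, h00⟩ := (hG h).mp hh
    refine ⟨?_, ?_, ?_⟩ <;>
      · show (w.val * h.val) _ _ = _
        rw [val_eq w hw10 hw11, val_eq h h10 h11, h00, Matrix.mul_fin_two]
        simp
  · rintro ⟨hM10, hM11, hM00⟩
    refine ⟨toGL 1 ((M.val 0 1 - w.val 0 1) / w.val 0 0) one_ne_zero, ?_, ?_⟩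
    · refine SetLike.mem_coe.mpr ((hG _).mpr ⟨?_, ?_, ?_⟩) <;> simp [toGL_val]
    · apply Units.ext
      rw [Units.val_mul, toGL_val]
      conv_lhs => rw [val_eq w hw10 hw11]
      rw [Matrix.mul_fin_two]
      conv_rhs => rw [val_eq M hM10 hM11]
      ext i j
      fin_cases i <;> fin_cases j <;> simp [hM00] <;> field_simp <;> ring

lemma cosetD (Δ : Subgroup (GL (Fin 2) F))
    (hΔ : ∀ M : GL (Fin 2) F, M ∈ Δ ↔ (M.val 1 0 = 0 ∧ M.val 1 1 = 1 ∧ M.val 0 1 = 0))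
    (w : GL (Fin 2) F) (hw10 : w.val 1 0 = 0) (hw11 : w.val 1 1 = 1) :
    (fun h => w * h) '' (Δ : Set (GL (Fin 2) F)) = CD (w.val 0 1) := by
  have hw00 := ne00 w hw10 hw11
  ext M
  constructor
  · rintro ⟨h, hh, rfl⟩
    obtain ⟨h10, h11, h01⟩ := (hΔ h).mp hh
    refine ⟨?_, ?_, ?_⟩ <;>
      · show (w.val * h.val) _ _ = _
        rw [val_eq w hw10 hw11, val_eq h h10 h11, h01, Matrix.mul_fin_two]
        simp
  · rintro ⟨hM10, hM11, hM01⟩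
    have hM00 := ne00 M hM10 hM11
    refine ⟨toGL (M.val 0 0 / w.val 0 0) 0 (div_ne_zero hM00 hw00), ?_, ?_⟩
    · refine SetLike.mem_coe.mpr ((hΔ _).mpr ⟨?_, ?_, ?_⟩) <;> simp [toGL_val]
    · apply Units.ext
      rw [Units.val_mul, toGL_val]
      conv_lhs => rw [val_eq w hw10 hw11]
      rw [Matrix.mul_fin_two]
      conv_rhs => rw [val_eq M hM10 hM11]
      ext i j
      fin_cases i <;> fin_cases j <;> simp [hM01] <;> field_simp

lemma image_CG (G : Subgroup (GL (Fin 2) F))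
    (hG : ∀ M : GL (Fin 2) F, M ∈ G ↔ (M.val 1 0 = 0 ∧ M.val 1 1 = 1 ∧ M.val 0 0 = 1))
    (g : GL (Fin 2) F) (hg10 : g.val 1 0 = 0) (hg11 : g.val 1 1 = 1)
    (b : F) (hb : b ≠ 0) :
    (fun h => g * h) '' CG b = CG (g.val 0 0 * b) := by
  have e0 : (toGL b 0 hb).val 0 0 = b := by simp [toGL_val]
  have h1 : CG b = (fun h => toGL b 0 hb * h) '' (G : Set (GL (Fin 2) F)) := by
    rw [cosetG G hG _ (by simp [toGL_val]) (by simp [toGL_val]), e0]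
  have h10 : (g * toGL b 0 hb).val 1 0 = 0 := by
    rw [Units.val_mul, toGL_val]
    conv_lhs => rw [val_eq g hg10 hg11]
    rw [Matrix.mul_fin_two]; simp
  have h11 : (g * toGL b 0 hb).val 1 1 = 1 := by
    rw [Units.val_mul, toGL_val]
    conv_lhs => rw [val_eq g hg10 hg11]
    rw [Matrix.mul_fin_two]; simp
  have h00 : (g * toGL b 0 hb).val 0 0 = g.val 0 0 * b := by
    rw [Units.val_mul, toGL_val]
    conv_lhs => rw [val_eq g hg10 hg11]
    rw [Matrix.mul_fin_two]; simp
  rw [h1, Set.image_image]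
  simp only [← mul_assoc]
  rw [cosetG G hG _ h10 h11, h00]

lemma image_CD (Δ : Subgroup (GL (Fin 2) F))
    (hΔ : ∀ M : GL (Fin 2) F, M ∈ Δ ↔ (M.val 1 0 = 0 ∧ M.val 1 1 = 1 ∧ M.val 0 1 = 0))
    (g : GL (Fin 2) F) (hg10 : g.val 1 0 = 0) (hg11 : g.val 1 1 = 1)
    (y : F) :
    (fun h => g * h) '' CD y = CD (g.val 0 0 * y + g.val 0 1) := by
  have e0 : (toGL 1 y one_ne_zero).val 0 1 = y := by simp [toGL_val]
  have h1 : CD y = (fun h => toGL 1 y one_ne_zero * h) '' (Δ : Set (GL (Fin 2) F)) := by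
    rw [cosetD Δ hΔ _ (by simp [toGL_val]) (by simp [toGL_val]), e0]
  have h10 : (g * toGL 1 y one_ne_zero).val 1 0 = 0 := by
    rw [Units.val_mul, toGL_val]
    conv_lhs => rw [val_eq g hg10 hg11]
    rw [Matrix.mul_fin_two]; simp
  have h11 : (g * toGL 1 y one_ne_zero).val 1 1 = 1 := by
    rw [Units.val_mul, toGL_val]
    conv_lhs => rw [val_eq g hg10 hg11]
    rw [Matrix.mul_fin_two]; simp
  have h01 : (g * toGL 1 y one_ne_zero).val 0 1 = g.val 0 0 * y + g.val 0 1 := by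
    rw [Units.val_mul, toGL_val]
    conv_lhs => rw [val_eq g hg10 hg11]
    rw [Matrix.mul_fin_two]; simp
  rw [h1, Set.image_image]
  simp only [← mul_assoc]
  rw [cosetD Δ hΔ _ h10 h11, h01]

noncomputable def omegaEquiv (Ω : Subgroup (GL (Fin 2) F))
    (hΩ : ∀ M : GL (Fin 2) F, M ∈ Ω ↔ (M.val 1 0 = 0 ∧ M.val 1 1 = 1)) :
    Ω ≃ {b : F // b ≠ 0} × F where
  toFun M := (⟨M.1.val 0 0,
    ne00 M.1 ((hΩ M.1).mp M.2).1 ((hΩ M.1).mp M.2).2⟩, M.1.val 0 1)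
  invFun p := ⟨toGL p.1.1 p.2 p.1.2, (hΩ _).mpr (by constructor <;> simp [toGL_val])⟩
  left_inv M := by
    apply Subtype.ext; apply Units.ext
    rw [toGL_val]
    exact (val_eq M.1 ((hΩ M.1).mp M.2).1 ((hΩ M.1).mp M.2).2).symm
  right_inv p := by
    refine Prod.ext ?_ ?_
    · apply Subtype.ext; simp [toGL_val]
    · simp [toGL_val]

end Stmt13

open Stmt13

/-- for `Ω = {[[a,x],[0,1]]}`, with `χ_L` the character of the regular
representation, `χ_K`, `χ_F` the permutation characters on `Ω/G`, `Ω/Δ` and `χ_k ≡ 1`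
the trivial character, as class functions on `Ω`:
`χ_L - χ_k = (χ_K - χ_k) + (q-1)(χ_F - χ_k)`. -/
theorem stmt_13 (F : Type) [Field F] [Fintype F]
    (Ω G Δ : Subgroup (GL (Fin 2) F))
    (hΩ : ∀ M : GL (Fin 2) F, M ∈ Ω ↔ (M.val 1 0 = 0 ∧ M.val 1 1 = 1))
    (hG : ∀ M : GL (Fin 2) F, M ∈ G ↔ (M ∈ Ω ∧ M.val 0 0 = 1))
    (hΔ : ∀ M : GL (Fin 2) F, M ∈ Δ ↔ (M ∈ Ω ∧ M.val 0 1 = 0))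
    (g : GL (Fin 2) F) (hg : g ∈ Ω)
    (χL χK χF : ℤ)
    (hχL : χL = if g = 1 then (Nat.card Ω : ℤ) else 0)
    (hχK : χK = Nat.card {S : Set (GL (Fin 2) F) |
      (∃ w ∈ Ω, S = (fun h => w * h) '' (G : Set (GL (Fin 2) F))) ∧
      (fun h => g * h) '' S = S})
    (hχF : χF = Nat.card {S : Set (GL (Fin 2) F) |
      (∃ w ∈ Ω, S = (fun h => w * h) '' (Δ : Set (GL (Fin 2) F))) ∧
      (fun h => g * h) '' S = S}) :
    χL - 1 = (χK - 1) + ((Fintype.card F : ℤ) - 1) * (χF - 1) := by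
  obtain ⟨hg10, hg11⟩ := (hΩ g).mp hg
  have ha0 : g.val 0 0 ≠ 0 := ne00 g hg10 hg11
  have hq : 1 ≤ Fintype.card F := Fintype.card_pos
  have hG' : ∀ M : GL (Fin 2) F,
      M ∈ G ↔ (M.val 1 0 = 0 ∧ M.val 1 1 = 1 ∧ M.val 0 0 = 1) := by
    intro M; rw [hG, hΩ]; tauto
  have hΔ' : ∀ M : GL (Fin 2) F,
      M ∈ Δ ↔ (M.val 1 0 = 0 ∧ M.val 1 1 = 1 ∧ M.val 0 1 = 0) := by
    intro M; rw [hΔ, hΩ]; tauto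
  have cardNe : Nat.card {b : F // b ≠ 0} = Fintype.card F - 1 := by
    rw [Nat.card_congr unitsEquivNeZero.symm, Nat.card_eq_fintype_card, Fintype.card_units]
  by_cases ha : g.val 0 0 = 1
  · -- χK = q - 1 in both subcases with a = 1
    have hKset : {S : Set (GL (Fin 2) F) |
        (∃ w ∈ Ω, S = (fun h => w * h) '' (G : Set (GL (Fin 2) F))) ∧
        (fun h => g * h) '' S = S}
        = Set.range (fun b : {b : F // b ≠ 0} => CG (b : F)) := by
      ext S
      constructor
      · rintro ⟨⟨w, hw, rfl⟩, -⟩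
        obtain ⟨hw10, hw11⟩ := (hΩ w).mp hw
        rw [cosetG G hG' w hw10 hw11]
        exact ⟨⟨w.val 0 0, ne00 w hw10 hw11⟩, rfl⟩
      · rintro ⟨⟨b, hb⟩, rfl⟩
        constructor
        · refine ⟨toGL b 0 hb, (hΩ _).mpr ⟨by simp, by simp⟩, ?_⟩
          rw [cosetG G hG' _ (by simp) (by simp)]
          simp
        · rw [image_CG G hG' g hg10 hg11 b hb, ha, one_mul]
    have hχK' : χK = (Fintype.card F : ℤ) - 1 := by
      rw [hχK, hKset, Nat.card_range_of_injective CG_inj, cardNe, Nat.cast_sub hq,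
        Nat.cast_one]
    by_cases hx : g.val 0 1 = 0
    · -- g = 1
      have hg1 : g = 1 := by
        apply Units.ext
        rw [Units.val_one, val_eq g hg10 hg11, ha, hx]
        exact Matrix.one_fin_two.symm
      have hFset : {S : Set (GL (Fin 2) F) |
          (∃ w ∈ Ω, S = (fun h => w * h) '' (Δ : Set (GL (Fin 2) F))) ∧
          (fun h => g * h) '' S = S}
          = Set.range (fun y : F => CD y) := by
        ext S
        constructor
        · rintro ⟨⟨w, hw, rfl⟩, -⟩
          obtain ⟨hw10, hw11⟩ := (hΩ w).mp hw
          rw [cosetD Δ hΔ' w hw10 hw11]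
          exact ⟨w.val 0 1, rfl⟩
        · rintro ⟨y, rfl⟩
          constructor
          · refine ⟨toGL 1 y one_ne_zero, (hΩ _).mpr ⟨by simp, by simp⟩, ?_⟩
            rw [cosetD Δ hΔ' _ (by simp) (by simp)]
            simp
          · rw [image_CD Δ hΔ' g hg10 hg11 y, ha, hx, one_mul, add_zero]
      have hχF' : χF = (Fintype.card F : ℤ) := by
        rw [hχF, hFset, Nat.card_range_of_injective CD_inj, Nat.card_eq_fintype_card]
      have hχL' : χL = ((Fintype.card F - 1) * Fintype.card F : ℕ) := by
        rw [hχL, if_pos hg1, Nat.card_congr (omegaEquiv Ω hΩ), Nat.card_prod,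
          cardNe, Nat.card_eq_fintype_card]
      rw [hχL', hχK', hχF', Nat.cast_mul, Nat.cast_sub hq]
      push_cast
      ring
    · -- a = 1, x ≠ 0 : g ≠ 1, χF = 0
      have hg1 : g ≠ 1 := by
        intro h
        apply hx
        rw [h]
        show (1 : Matrix (Fin 2) (Fin 2) F) 0 1 = 0
        rw [Matrix.one_fin_two]
        simp
      have hFset : {S : Set (GL (Fin 2) F) |
          (∃ w ∈ Ω, S = (fun h => w * h) '' (Δ : Set (GL (Fin 2) F))) ∧
          (fun h => g * h) '' S = S} = ∅ := by
        rw [Set.eq_empty_iff_forall_notMem]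
        rintro S ⟨⟨w, hw, rfl⟩, hfix⟩
        obtain ⟨hw10, hw11⟩ := (hΩ w).mp hw
        rw [cosetD Δ hΔ' w hw10 hw11, image_CD Δ hΔ' g hg10 hg11] at hfix
        have := CD_inj hfix
        rw [ha, one_mul] at this
        exact hx (add_eq_left.mp this)
      have hχF' : χF = 0 := by
        rw [hχF, hFset]
        simp
      have hχL' : χL = 0 := by rw [hχL, if_neg hg1]
      rw [hχL', hχK', hχF']
      ring
  · -- a ≠ 1 : g ≠ 1, χK = 0, χF = 1
    have hg1 : g ≠ 1 := by
      intro h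
      apply ha
      rw [h]
      show (1 : Matrix (Fin 2) (Fin 2) F) 0 0 = 1
      rw [Matrix.one_fin_two]
      simp
    have h1a : (1 : F) - g.val 0 0 ≠ 0 := sub_ne_zero.mpr (Ne.symm ha)
    have hKset : {S : Set (GL (Fin 2) F) |
        (∃ w ∈ Ω, S = (fun h => w * h) '' (G : Set (GL (Fin 2) F))) ∧
        (fun h => g * h) '' S = S} = ∅ := by
      rw [Set.eq_empty_iff_forall_notMem]
      rintro S ⟨⟨w, hw, rfl⟩, hfix⟩
      obtain ⟨hw10, hw11⟩ := (hΩ w).mp hw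
      have hw00 : w.val 0 0 ≠ 0 := ne00 w hw10 hw11
      rw [cosetG G hG' w hw10 hw11, image_CG G hG' g hg10 hg11 _ hw00] at hfix
      have h2 : (⟨g.val 0 0 * w.val 0 0, mul_ne_zero ha0 hw00⟩ : {b : F // b ≠ 0})
          = ⟨w.val 0 0, hw00⟩ := CG_inj hfix
      have h3 : g.val 0 0 * w.val 0 0 = w.val 0 0 := congrArg Subtype.val h2
      apply ha
      have := mul_right_cancel₀ hw00 (h3.trans (one_mul (w.val 0 0)).symm)
      exact this
    have hχK' : χK = 0 := by
      rw [hχK, hKset]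
      simp
    have hFset : {S : Set (GL (Fin 2) F) |
        (∃ w ∈ Ω, S = (fun h => w * h) '' (Δ : Set (GL (Fin 2) F))) ∧
        (fun h => g * h) '' S = S}
        = {CD ((1 - g.val 0 0)⁻¹ * g.val 0 1)} := by
      ext S
      constructor
      · rintro ⟨⟨w, hw, rfl⟩, hfix⟩
        obtain ⟨hw10, hw11⟩ := (hΩ w).mp hw
        rw [cosetD Δ hΔ' w hw10 hw11, image_CD Δ hΔ' g hg10 hg11] at hfix
        have h2 := CD_inj hfix
        have hy : w.val 0 1 = (1 - g.val 0 0)⁻¹ * g.val 0 1 := by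
          rw [eq_inv_mul_iff_mul_eq₀ h1a]
          linear_combination -h2
        rw [cosetD Δ hΔ' w hw10 hw11, hy]
        rfl
      · intro hS
        rw [Set.mem_singleton_iff] at hS
        subst hS
        constructor
        · refine ⟨toGL 1 ((1 - g.val 0 0)⁻¹ * g.val 0 1) one_ne_zero, (hΩ _).mpr ⟨by simp, by simp⟩, ?_⟩
          rw [cosetD Δ hΔ' _ (by simp) (by simp)]
          simp
        · rw [image_CD Δ hΔ' g hg10 hg11]
          congr 1
          field_simp
          ring
    have hχF' : χF = 1 := by
      rw [hχF, hFset]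
      simp
    have hχL' : χL = 0 := by rw [hχL, if_neg hg1]
    rw [hχL', hχK', hχF']
    ring
end
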